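/- Let P be a positive opetope arising by switching γ and δ on 1-dimensional faces from a positive opetope P; then P^{op} is a positive opetope. -/

import Mathlib

open scoped Classical

structure PHg where
  Face : ℕ → Type
  fin : ∀ k, Finite (Face k)
  γ : ∀ k, Face (k+1) → Face k
  δ : ∀ k, Face (k+1) → Face k → Prop
  δ_total : ∀ k a, ∃ x, δ k a x
  δ0_fun : ∀ (a : Face 1) (x y : Face 0), δ 0 a x → δ 0 a y → x = y
  bounded : ∃ n, ∀ k, n < k → IsEmpty (Face k)

abbrev PHg.FaceS (S : PHg) : Type := Σ k, S.Face k

/-- The codomain operation, viewed on faces of arbitrary dimension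
(identity in dimension 0). -/
def gammaS (S : PHg) : S.FaceS → S.FaceS
  | ⟨0, x⟩ => ⟨0, x⟩
  | ⟨k+1, x⟩ => ⟨k, S.γ k x⟩

/-- `x ∈ δ(q)`. -/
def inDelta (S : PHg) (x q : S.FaceS) : Prop :=
  match q with
  | ⟨0, _⟩ => False
  | ⟨k+1, a⟩ => ∃ h : x.1 = k, S.δ k a (h ▸ x.2)

/-- `x = γ(q)` (for `q` of positive dimension). -/
def inGammaS (S : PHg) (x q : S.FaceS) : Prop := 0 < q.1 ∧ gammaS S q = x

/-- `x ∈ ∂(q) = {γ(q)} ∪ δ(q)`. -/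
def inBoundary (S : PHg) (x q : S.FaceS) : Prop := inGammaS S x q ∨ inDelta S x q

def covPlus (S : PHg) (a b : S.FaceS) : Prop :=
  ∃ α, inDelta S a α ∧ gammaS S α = b

/-- The upper order `<⁺`. -/
def ltPlus (S : PHg) : S.FaceS → S.FaceS → Prop := Relation.TransGen (covPlus S)

def lePlus (S : PHg) (a b : S.FaceS) : Prop := a = b ∨ ltPlus S a b

def perpPlus (S : PHg) (a b : S.FaceS) : Prop := ltPlus S a b ∨ ltPlus S b a

def covMinus (S : PHg) (a b : S.FaceS) : Prop := 0 < a.1 ∧ inDelta S (gammaS S a) b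

/-- The lower order `<⁻`. -/
def ltMinus (S : PHg) : S.FaceS → S.FaceS → Prop := Relation.TransGen (covMinus S)

def perpMinus (S : PHg) (a b : S.FaceS) : Prop := ltMinus S a b ∨ ltMinus S b a

/-- Iterated codomain `γ^{(k)}`. -/
def gammaIter (S : PHg) (k : ℕ) (p : S.FaceS) : S.FaceS := (gammaS S)^[p.1 - k] p

/-- `X` is a `<⁺`-interval. -/
def IntervalPlus (S : PHg) (X : Set S.FaceS) : Prop :=
  X = ∅ ∨ ∃ x0 x1, lePlus S x0 x1 ∧ X = {x | lePlus S x0 x ∧ lePlus S x x1}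

def hasDim (S : PHg) (n : ℕ) : Prop :=
  Nonempty (S.Face n) ∧ ∀ k, n < k → IsEmpty (S.Face k)

/-- A positive opetope: a nonempty positive hypergraph satisfying globularity,
strictness, disjointness, pencil linearity, and having at most one face outside
`δ(S_{k+1})` in each dimension. -/
structure IsOpetope (S : PHg) : Prop where
  ne : Nonempty (S.Face 0)
  glob_gamma : ∀ a : S.FaceS, 2 ≤ a.1 →
    ({gammaS S (gammaS S a)} : Set S.FaceS) =
      {x | ∃ y, inDelta S y a ∧ gammaS S y = x} \ {x | ∃ y, inDelta S y a ∧ inDelta S x y}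
  glob_delta : ∀ a : S.FaceS, 2 ≤ a.1 →
    {x | inDelta S x (gammaS S a)} =
      {x | ∃ y, inDelta S y a ∧ inDelta S x y} \ {x | ∃ y, inDelta S y a ∧ gammaS S y = x}
  strict : ∀ a, ¬ ltPlus S a a
  linear0 : ∀ a b : S.FaceS, a.1 = 0 → b.1 = 0 → a = b ∨ perpPlus S a b
  disj : ∀ a b : S.FaceS, 0 < a.1 → ¬ (perpMinus S a b ∧ perpPlus S a b)
  pencil_gamma : ∀ x a b, inGammaS S x a → inGammaS S x b → a = b ∨ perpPlus S a b
  pencil_delta : ∀ x a b, inDelta S x a → inDelta S x b → a = b ∨ perpPlus S a b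
  size_le_one : ∀ k (a b : S.Face k),
    (¬ ∃ α : S.Face (k+1), S.δ k α a) → (¬ ∃ α : S.Face (k+1), S.δ k α b) → a = b
/-- The dual positive hypergraph: `γ` and `δ` interchanged on faces of dimension 1. -/
noncomputable def PHg.dual (S : PHg) : PHg where
  Face := S.Face
  fin := S.fin
  γ := fun k => match k with
    | 0 => fun a => Classical.choose (S.δ_total 0 a)
    | k+1 => S.γ (k+1)
  δ := fun k => match k with
    | 0 => fun a x => S.γ 0 a = x
    | k+1 => S.δ (k+1)
  δ_total := fun k => match k with
    | 0 => fun a => ⟨S.γ 0 a, rfl⟩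
    | k+1 => fun a => S.δ_total (k+1) a
  δ0_fun := fun _ _ _ hx hy => hx.symm.trans hy
  bounded := S.bounded

section Aux

variable (S : PHg)

lemma inDelta_iff (k : ℕ) (a : S.Face (k+1)) (x : S.FaceS) :
    inDelta S x ⟨k+1, a⟩ ↔ ∃ v : S.Face k, S.δ k a v ∧ x = ⟨k, v⟩ := by
  constructor
  · obtain ⟨m, u⟩ := x
    rintro ⟨h, hv⟩
    dsimp only at h
    subst h
    exact ⟨u, hv, rfl⟩
  · rintro ⟨v, hv, rfl⟩
    exact ⟨rfl, hv⟩

lemma inDelta_dim {x q : S.FaceS} (h : inDelta S x q) : x.1 + 1 = q.1 := by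
  obtain ⟨m, u⟩ := q
  cases m with
  | zero => exact h.elim
  | succ k =>
    rcases (inDelta_iff S k u x).1 h with ⟨v, -, rfl⟩
    rfl

lemma gammaS_dim {q : S.FaceS} (h : 0 < q.1) : (gammaS S q).1 + 1 = q.1 := by
  obtain ⟨m, u⟩ := q
  cases m with
  | zero => exact absurd h (by simp)
  | succ k => rfl

lemma covPlus_dim {a b : S.FaceS} (h : covPlus S a b) : a.1 = b.1 := by
  obtain ⟨α, h1, h2⟩ := h
  have d1 := inDelta_dim S h1
  have d2 : 0 < α.1 := by omega
  have d3 := gammaS_dim S d2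
  rw [h2] at d3
  omega

lemma ltPlus_dim {a b : S.FaceS} (h : ltPlus S a b) : a.1 = b.1 := by
  induction h with
  | single hc => exact covPlus_dim S hc
  | tail _ hc ih => exact ih.trans (covPlus_dim S hc)

lemma covMinus_dim {a b : S.FaceS} (h : covMinus S a b) : a.1 = b.1 := by
  obtain ⟨h0, h1⟩ := h
  have d1 := inDelta_dim S h1
  have d3 := gammaS_dim S h0
  omega

lemma ltMinus_dim {a b : S.FaceS} (h : ltMinus S a b) : a.1 = b.1 := by
  induction h with
  | single hc => exact covMinus_dim S hc
  | tail _ hc ih => exact ih.trans (covMinus_dim S hc)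

end Aux
section Dual

variable (S : PHg)

lemma choose_delta0 (a : S.Face 1) (x : S.Face 0) :
    S.δ 0 a x ↔ Classical.choose (S.δ_total 0 a) = x := by
  constructor
  · intro h
    exact S.δ0_fun a _ _ (Classical.choose_spec (S.δ_total 0 a)) h
  · rintro rfl
    exact Classical.choose_spec (S.δ_total 0 a)

lemma dual_gamma_one (a : S.Face 1) :
    gammaS S.dual ⟨1, a⟩ = ⟨0, Classical.choose (S.δ_total 0 a)⟩ := rfl

lemma inDelta_one_iff (a : S.Face 1) (x : S.FaceS) :
    inDelta S x ⟨1, a⟩ ↔ gammaS S.dual ⟨1, a⟩ = x := by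
  rw [inDelta_iff, dual_gamma_one]
  constructor
  · rintro ⟨v, hv, rfl⟩
    show (⟨0, Classical.choose (S.δ_total 0 a)⟩ : S.FaceS) = ⟨0, v⟩
    rw [(choose_delta0 S a v).1 hv]
  · rintro rfl
    exact ⟨_, (choose_delta0 S a _).2 rfl, rfl⟩

lemma inDelta_dual_one_iff (a : S.Face 1) (x : S.FaceS) :
    inDelta S.dual x ⟨1, a⟩ ↔ gammaS S ⟨1, a⟩ = x := by
  rw [inDelta_iff S.dual 0 a x]
  show (∃ v, S.γ 0 a = v ∧ x = ⟨0, v⟩) ↔ _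
  constructor
  · rintro ⟨v, rfl, rfl⟩
    rfl
  · rintro rfl
    exact ⟨_, rfl, rfl⟩

lemma inDelta_dual_ne_one {x q : S.FaceS} (h : q.1 ≠ 1) :
    inDelta S.dual x q ↔ inDelta S x q := by
  obtain ⟨m, u⟩ := q
  match m with
  | 0 => exact Iff.rfl
  | 1 => exact absurd rfl h
  | k+2 => exact Iff.rfl

lemma gammaS_dual_ne_one {q : S.FaceS} (h : q.1 ≠ 1) :
    gammaS S.dual q = gammaS S q := by
  obtain ⟨m, u⟩ := q
  match m with
  | 0 => rfl
  | 1 => exact absurd rfl h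
  | k+2 => rfl

end Dual
section Cov

variable (S : PHg)

lemma covPlus_dual_pos {a b : S.FaceS} (h : 0 < a.1) :
    covPlus S.dual a b ↔ covPlus S a b := by
  constructor
  · rintro ⟨α, h1, h2⟩
    have hd : a.1 + 1 = α.1 := inDelta_dim S.dual h1
    have hne : α.1 ≠ 1 := by omega
    exact ⟨α, (inDelta_dual_ne_one S hne).1 h1, (gammaS_dual_ne_one S hne) ▸ h2⟩
  · rintro ⟨α, h1, h2⟩
    have hd : a.1 + 1 = α.1 := inDelta_dim S h1
    have hne : α.1 ≠ 1 := by omega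
    exact ⟨α, (inDelta_dual_ne_one S hne).2 h1, (gammaS_dual_ne_one S hne).symm ▸ h2⟩

lemma covPlus_dual_zero {a b : S.FaceS} (h : a.1 = 0) :
    covPlus S.dual a b ↔ covPlus S b a := by
  constructor
  · rintro ⟨α, h1, h2⟩
    have hd : a.1 + 1 = α.1 := inDelta_dim S.dual h1
    obtain ⟨m, q⟩ := α
    have hm : m = 1 := by simpa [h] using hd.symm
    subst hm
    refine ⟨⟨1, q⟩, ?_, ?_⟩
    · exact (inDelta_one_iff S q b).2 h2
    · exact ((inDelta_dual_one_iff S q a).1 h1)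
  · rintro ⟨α, h1, h2⟩
    have hb : b.1 = a.1 := by
      have d1 := inDelta_dim S h1
      have d2 : 0 < α.1 := by omega
      have d3 := gammaS_dim S d2
      rw [h2] at d3; omega
    have hd : b.1 + 1 = α.1 := inDelta_dim S h1
    obtain ⟨m, q⟩ := α
    have hm : m = 1 := by simp at hd; omega
    subst hm
    refine ⟨⟨1, q⟩, ?_, ?_⟩
    · rw [inDelta_dual_one_iff]; exact h2
    · exact ((inDelta_one_iff S q b).1 h1)

lemma ltPlus_dual_pos {a b : S.FaceS} (h : 0 < a.1) :
    ltPlus S.dual a b ↔ ltPlus S a b := by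
  constructor
  · intro hl
    induction hl with
    | single hc => exact .single ((covPlus_dual_pos S h).1 hc)
    | tail h1 hc ih =>
      have hc0 : 0 < _ := (ltPlus_dim S.dual h1) ▸ h
      exact ih.tail ((covPlus_dual_pos S hc0).1 hc)
  · intro hl
    induction hl with
    | single hc => exact .single ((covPlus_dual_pos S h).2 hc)
    | tail h1 hc ih =>
      have hc0 : 0 < _ := (ltPlus_dim S h1) ▸ h
      exact ih.tail ((covPlus_dual_pos S hc0).2 hc)

lemma ltPlus_dual_zero_mp {a b : S.FaceS} (h : a.1 = 0) (hl : ltPlus S.dual a b) :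
    ltPlus S b a := by
  induction hl with
  | single hc => exact .single ((covPlus_dual_zero S h).1 hc)
  | tail h1 hc ih =>
    have hc0 : _ = 0 := (ltPlus_dim S.dual h1) ▸ h
    exact Relation.TransGen.head ((covPlus_dual_zero S hc0).1 hc) ih

lemma ltPlus_dual_zero_mpr' {b a : S.FaceS} (hl : ltPlus S b a) :
    a.1 = 0 → ltPlus S.dual a b := by
  induction hl with
  | single hc => exact fun h0 => .single ((covPlus_dual_zero S h0).2 hc)
  | tail h1 hc ih =>
    intro h0
    have hc0 := covPlus_dim S hc
    exact Relation.TransGen.head ((covPlus_dual_zero S (by omega)).2 hc) (ih (by omega))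

lemma ltPlus_dual_zero {a b : S.FaceS} (h : a.1 = 0) :
    ltPlus S.dual a b ↔ ltPlus S b a :=
  ⟨ltPlus_dual_zero_mp S h, fun hl => ltPlus_dual_zero_mpr' S hl h⟩

end Cov
section CovM

variable (S : PHg)

lemma covMinus_dual_one {a b : S.FaceS} (h : a.1 = 1) :
    covMinus S.dual a b ↔ covMinus S b a := by
  obtain ⟨m, p⟩ := a
  have hm : m = 1 := by simpa using h
  subst hm
  constructor
  · rintro ⟨h0, h1⟩
    have hd : (gammaS S.dual ⟨1,p⟩).1 + 1 = b.1 := inDelta_dim S.dual h1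
    rw [dual_gamma_one] at hd
    obtain ⟨n, q⟩ := b
    have hn : n = 1 := by simpa using hd.symm
    subst hn
    refine ⟨Nat.one_pos, ?_⟩
    rw [inDelta_one_iff]
    exact ((inDelta_dual_one_iff S q _).1 h1).symm
  · rintro ⟨h0, h1⟩
    have hd : (gammaS S b).1 + 1 = 1 := inDelta_dim S h1
    have hb : 0 < b.1 := h0
    have hd2 := gammaS_dim S hb
    obtain ⟨n, q⟩ := b
    have hn : n = 1 := by simp at hd2 ⊢; omega
    subst hn
    refine ⟨Nat.one_pos, ?_⟩
    exact (inDelta_dual_one_iff S q _).2 ((inDelta_one_iff S p _).1 h1).symm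

lemma covMinus_dual_big {a b : S.FaceS} (h : 2 ≤ a.1) :
    covMinus S.dual a b ↔ covMinus S a b := by
  have h0 : 0 < a.1 := by omega
  have hgd : gammaS S.dual a = gammaS S a := gammaS_dual_ne_one S (by omega)
  have hgdim := gammaS_dim S h0
  constructor
  · rintro ⟨_, h1⟩
    rw [hgd] at h1
    have hbd : (gammaS S a).1 + 1 = b.1 := inDelta_dim S.dual h1
    exact ⟨h0, (inDelta_dual_ne_one S (by omega)).1 h1⟩
  · rintro ⟨_, h1⟩
    have hbd : (gammaS S a).1 + 1 = b.1 := inDelta_dim S h1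
    exact ⟨h0, hgd ▸ (inDelta_dual_ne_one S (q := b) (by omega)).2 h1⟩

lemma ltMinus_dual_one_mp {a b : S.FaceS} (h : a.1 = 1) (hl : ltMinus S.dual a b) :
    ltMinus S b a := by
  induction hl with
  | single hc => exact .single ((covMinus_dual_one S h).1 hc)
  | tail h1 hc ih =>
    have hc0 : _ = 1 := (ltMinus_dim S.dual h1) ▸ h
    exact Relation.TransGen.head ((covMinus_dual_one S hc0).1 hc) ih

lemma ltMinus_dual_one_mpr' {b a : S.FaceS} (hl : ltMinus S b a) :
    a.1 = 1 → ltMinus S.dual a b := by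
  induction hl with
  | single hc => exact fun h0 => .single ((covMinus_dual_one S h0).2 hc)
  | tail h1 hc ih =>
    intro h0
    have hc0 := covMinus_dim S hc
    exact Relation.TransGen.head ((covMinus_dual_one S (by omega)).2 hc) (ih (by omega))

lemma ltMinus_dual_one {a b : S.FaceS} (h : a.1 = 1) :
    ltMinus S.dual a b ↔ ltMinus S b a :=
  ⟨ltMinus_dual_one_mp S h, fun hl => ltMinus_dual_one_mpr' S hl h⟩

lemma ltMinus_dual_big {a b : S.FaceS} (h : 2 ≤ a.1) :
    ltMinus S.dual a b ↔ ltMinus S a b := by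
  constructor
  · intro hl
    induction hl with
    | single hc => exact .single ((covMinus_dual_big S h).1 hc)
    | tail h1 hc ih =>
      have hc0 : 2 ≤ _ := (ltMinus_dim S.dual h1) ▸ h
      exact ih.tail ((covMinus_dual_big S hc0).1 hc)
  · intro hl
    induction hl with
    | single hc => exact .single ((covMinus_dual_big S h).2 hc)
    | tail h1 hc ih =>
      have hc0 : 2 ≤ _ := (ltMinus_dim S h1) ▸ h
      exact ih.tail ((covMinus_dual_big S hc0).2 hc)

end CovM
section Perp

variable (S : PHg)

lemma perpPlus_dual_of_pos {a b : S.FaceS} (ha : 0 < a.1) (hb : 0 < b.1)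
    (h : perpPlus S a b) : perpPlus S.dual a b := by
  rcases h with h | h
  · exact Or.inl ((ltPlus_dual_pos S ha).2 h)
  · exact Or.inr ((ltPlus_dual_pos S hb).2 h)

lemma no_gamma_not_lt {c : S.Face 0} (hc : ¬ ∃ α : S.Face 1, S.γ 0 α = c)
    (z : S.FaceS) : ¬ ltPlus S z ⟨0, c⟩ := by
  intro hz
  have last : ∃ u, covPlus S u ⟨0, c⟩ := by
    cases hz with
    | single h => exact ⟨_, h⟩
    | tail _ h => exact ⟨_, h⟩
  obtain ⟨u, α, h1, h2⟩ := last
  obtain ⟨m, q⟩ := α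
  match m, q, h1, h2 with
  | 0, q, h1, h2 => exact h1.elim
  | 1, q, h1, h2 =>
    have : S.γ 0 q = c := by
      have h3 : (⟨0, S.γ 0 q⟩ : S.FaceS) = ⟨0, c⟩ := h2
      simpa using h3
    exact hc ⟨q, this⟩
  | k+2, q, h1, h2 =>
    have h3 : (⟨k+1, S.γ (k+1) q⟩ : S.FaceS) = ⟨0, c⟩ := h2
    have := congrArg Sigma.fst h3
    simp at this

end Perp

/-- The dual `P^op` of a positive opetope (obtained by switching
`γ` and `δ` on 1-dimensional faces) is again a positive opetope. -/
theorem dual_is_opetope (S : PHg) (hS : IsOpetope S) : IsOpetope S.dual := by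
  refine ⟨hS.ne, ?_, ?_, ?_, ?_, ?_, ?_, ?_, ?_⟩
  · -- glob_gamma
    rintro ⟨n, p⟩ hn
    match n, p with
    | 2, p =>
      have base := Set.ext_iff.mp (hS.glob_delta ⟨2, p⟩ (by exact le_refl 2))
      ext x
      simp only [Set.mem_singleton_iff, Set.mem_diff, Set.mem_setOf_eq]
      have bx := base x
      constructor
      · intro hx
        have hxd : inDelta S x (gammaS S ⟨2, p⟩) :=
          (inDelta_one_iff S (S.γ 1 p) x).2 hx.symm
        obtain ⟨hex, hnot⟩ := bx.1 hxd
        constructor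
        · obtain ⟨y, hy, hxy⟩ := hex
          have hd : y.1 + 1 = 2 := inDelta_dim S hy
          obtain ⟨m, q⟩ := y
          have hm : m = 1 := by
            have hd' : m + 1 = 2 := hd
            omega
          subst hm
          exact ⟨⟨1, q⟩, hy, (inDelta_one_iff S q x).1 hxy⟩
        · rintro ⟨y, hy, hxy⟩
          have hy' : inDelta S y ⟨2, p⟩ := hy
          have hd : y.1 + 1 = 2 := inDelta_dim S hy'
          obtain ⟨m, q⟩ := y
          have hm : m = 1 := by
            have hd' : m + 1 = 2 := hd
            omega
          subst hm
          exact hnot ⟨⟨1, q⟩, hy', (inDelta_dual_one_iff S q x).1 hxy⟩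
      · rintro ⟨hex, hnot⟩
        have hex' : ∃ y, inDelta S y ⟨2, p⟩ ∧ inDelta S x y := by
          obtain ⟨y, hy, hxy⟩ := hex
          have hy' : inDelta S y ⟨2, p⟩ := hy
          have hd : y.1 + 1 = 2 := inDelta_dim S hy'
          obtain ⟨m, q⟩ := y
          have hm : m = 1 := by
            have hd' : m + 1 = 2 := hd
            omega
          subst hm
          exact ⟨⟨1, q⟩, hy', (inDelta_one_iff S q x).2 hxy⟩
        have hnot' : ¬ ∃ y, inDelta S y ⟨2, p⟩ ∧ gammaS S y = x := by
          rintro ⟨y, hy, hxy⟩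
          have hd : y.1 + 1 = 2 := inDelta_dim S hy
          obtain ⟨m, q⟩ := y
          have hm : m = 1 := by
            have hd' : m + 1 = 2 := hd
            omega
          subst hm
          exact hnot ⟨⟨1, q⟩, hy, (inDelta_dual_one_iff S q x).2 hxy⟩
        have hxd := bx.2 ⟨hex', hnot'⟩
        exact ((inDelta_one_iff S (S.γ 1 p) x).1 hxd).symm
    | (m+3), p =>
      have base := Set.ext_iff.mp (hS.glob_gamma ⟨m+3, p⟩ (show 2 ≤ m+3 by omega))
      ext x
      simp only [Set.mem_singleton_iff, Set.mem_diff, Set.mem_setOf_eq]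
      have bx := base x
      have convA : (∃ y, inDelta S y (⟨m+3, p⟩ : S.FaceS) ∧ gammaS S.dual y = x) ↔
          (∃ y, inDelta S y (⟨m+3, p⟩ : S.FaceS) ∧ gammaS S y = x) := by
        constructor <;> rintro ⟨y, hy, hxy⟩ <;>
          have hd : y.1 + 1 = m + 3 := inDelta_dim S hy
        · exact ⟨y, hy, (gammaS_dual_ne_one S (q := y) (by omega)) ▸ hxy⟩
        · exact ⟨y, hy, (gammaS_dual_ne_one S (q := y) (by omega)).symm ▸ hxy⟩
      have convB : (∃ y, inDelta S y (⟨m+3, p⟩ : S.FaceS) ∧ inDelta S.dual x y) ↔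
          (∃ y, inDelta S y (⟨m+3, p⟩ : S.FaceS) ∧ inDelta S x y) := by
        constructor <;> rintro ⟨y, hy, hxy⟩ <;>
          have hd : y.1 + 1 = m + 3 := inDelta_dim S hy
        · exact ⟨y, hy, (inDelta_dual_ne_one S (q := y) (by omega)).1 hxy⟩
        · exact ⟨y, hy, (inDelta_dual_ne_one S (q := y) (by omega)).2 hxy⟩
      constructor
      · intro hx
        have hx' : x = gammaS S (gammaS S ⟨m+3, p⟩) := hx
        obtain ⟨hex, hnot⟩ := bx.1 hx'
        exact ⟨convA.2 hex, fun h => hnot (convB.1 h)⟩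
      · rintro ⟨hex, hnot⟩
        have := bx.2 ⟨convA.1 hex, fun h => hnot (convB.2 h)⟩
        exact this
  · -- glob_delta
    rintro ⟨n, p⟩ hn
    match n, p with
    | 2, p =>
      have base := Set.ext_iff.mp (hS.glob_gamma ⟨2, p⟩ (by exact le_refl 2))
      ext x
      simp only [Set.mem_diff, Set.mem_setOf_eq]
      have bx := base x
      constructor
      · intro hx
        -- hx : inDelta S.dual x (gammaS S.dual ⟨2,p⟩), i.e. x = γγ
        have hx' : gammaS S (⟨1, S.γ 1 p⟩ : S.FaceS) = x :=
          (inDelta_dual_one_iff S (S.γ 1 p) x).1 hx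
        obtain ⟨hex, hnot⟩ := bx.1 hx'.symm
        constructor
        · obtain ⟨y, hy, hxy⟩ := hex
          have hd : y.1 + 1 = 2 := inDelta_dim S hy
          obtain ⟨m, q⟩ := y
          have hm : m = 1 := by
            have hd' : m + 1 = 2 := hd
            omega
          subst hm
          exact ⟨⟨1, q⟩, hy, (inDelta_dual_one_iff S q x).2 hxy⟩
        · rintro ⟨y, hy, hxy⟩
          have hy' : inDelta S y ⟨2, p⟩ := hy
          have hd : y.1 + 1 = 2 := inDelta_dim S hy'
          obtain ⟨m, q⟩ := y
          have hm : m = 1 := by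
            have hd' : m + 1 = 2 := hd
            omega
          subst hm
          exact hnot ⟨⟨1, q⟩, hy', (inDelta_one_iff S q x).2 hxy⟩
      · rintro ⟨hex, hnot⟩
        have hex' : ∃ y, inDelta S y ⟨2, p⟩ ∧ gammaS S y = x := by
          obtain ⟨y, hy, hxy⟩ := hex
          have hy' : inDelta S y ⟨2, p⟩ := hy
          have hd : y.1 + 1 = 2 := inDelta_dim S hy'
          obtain ⟨m, q⟩ := y
          have hm : m = 1 := by
            have hd' : m + 1 = 2 := hd
            omega
          subst hm
          exact ⟨⟨1, q⟩, hy', (inDelta_dual_one_iff S q x).1 hxy⟩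
        have hnot' : ¬ ∃ y, inDelta S y ⟨2, p⟩ ∧ inDelta S x y := by
          rintro ⟨y, hy, hxy⟩
          have hd : y.1 + 1 = 2 := inDelta_dim S hy
          obtain ⟨m, q⟩ := y
          have hm : m = 1 := by
            have hd' : m + 1 = 2 := hd
            omega
          subst hm
          exact hnot ⟨⟨1, q⟩, hy, (inDelta_one_iff S q x).1 hxy⟩
        have hxe := bx.2 ⟨hex', hnot'⟩
        exact (inDelta_dual_one_iff S (S.γ 1 p) x).2 hxe.symm
    | (m+3), p =>
      have base := Set.ext_iff.mp (hS.glob_delta ⟨m+3, p⟩ (show 2 ≤ m+3 by omega))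
      ext x
      simp only [Set.mem_diff, Set.mem_setOf_eq]
      have bx := base x
      have convA : (∃ y, inDelta S y (⟨m+3, p⟩ : S.FaceS) ∧ inDelta S.dual x y) ↔
          (∃ y, inDelta S y (⟨m+3, p⟩ : S.FaceS) ∧ inDelta S x y) := by
        constructor <;> rintro ⟨y, hy, hxy⟩ <;>
          have hd : y.1 + 1 = m + 3 := inDelta_dim S hy
        · exact ⟨y, hy, (inDelta_dual_ne_one S (q := y) (by omega)).1 hxy⟩
        · exact ⟨y, hy, (inDelta_dual_ne_one S (q := y) (by omega)).2 hxy⟩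
      have convB : (∃ y, inDelta S y (⟨m+3, p⟩ : S.FaceS) ∧ gammaS S.dual y = x) ↔
          (∃ y, inDelta S y (⟨m+3, p⟩ : S.FaceS) ∧ gammaS S y = x) := by
        constructor <;> rintro ⟨y, hy, hxy⟩ <;>
          have hd : y.1 + 1 = m + 3 := inDelta_dim S hy
        · exact ⟨y, hy, (gammaS_dual_ne_one S (q := y) (by omega)) ▸ hxy⟩
        · exact ⟨y, hy, (gammaS_dual_ne_one S (q := y) (by omega)).symm ▸ hxy⟩
      constructor
      · intro hx
        have hx' : inDelta S x (gammaS S ⟨m+3, p⟩) := hx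
        obtain ⟨hex, hnot⟩ := bx.1 hx'
        exact ⟨convA.2 hex, fun h => hnot (convB.1 h)⟩
      · rintro ⟨hex, hnot⟩
        have := bx.2 ⟨convA.1 hex, fun h => hnot (convB.2 h)⟩
        exact this
  · -- strict
    intro a ha
    rcases Nat.eq_zero_or_pos a.1 with h0 | h0
    · exact hS.strict a ((ltPlus_dual_zero S h0).1 ha)
    · exact hS.strict a ((ltPlus_dual_pos S h0).1 ha)
  · -- linear0
    intro a b h0a h0b
    rcases hS.linear0 a b h0a h0b with h | h | h
    · exact Or.inl h
    · exact Or.inr (Or.inr ((ltPlus_dual_zero S h0b).2 h))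
    · exact Or.inr (Or.inl ((ltPlus_dual_zero S h0a).2 h))
  · -- disj
    rintro a b h0 ⟨hm, hp⟩
    have hab : a.1 = b.1 := by
      rcases hm with h | h
      · exact ltMinus_dim S.dual h
      · exact (ltMinus_dim S.dual h).symm
    rcases Nat.lt_or_ge a.1 2 with h2 | h2
    · have ha1 : a.1 = 1 := by omega
      have hb1 : b.1 = 1 := by omega
      have pm : perpMinus S a b := by
        rcases hm with h | h
        · exact Or.inr (ltMinus_dual_one_mp S ha1 h)
        · exact Or.inl (ltMinus_dual_one_mp S hb1 h)
      have pp : perpPlus S a b := by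
        rcases hp with h | h
        · exact Or.inl ((ltPlus_dual_pos S h0).1 h)
        · exact Or.inr ((ltPlus_dual_pos S (by omega)).1 h)
      exact hS.disj a b h0 ⟨pm, pp⟩
    · have pm : perpMinus S a b := by
        rcases hm with h | h
        · exact Or.inl ((ltMinus_dual_big S h2).1 h)
        · exact Or.inr ((ltMinus_dual_big S (by omega)).1 h)
      have pp : perpPlus S a b := by
        rcases hp with h | h
        · exact Or.inl ((ltPlus_dual_pos S h0).1 h)
        · exact Or.inr ((ltPlus_dual_pos S (by omega)).1 h)
      exact hS.disj a b h0 ⟨pm, pp⟩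
  · -- pencil_gamma
    rintro x a b ⟨ha0, hga⟩ ⟨hb0, hgb⟩
    have hda : x.1 + 1 = a.1 := by
      have := gammaS_dim S.dual ha0
      rw [hga] at this
      exact this
    have hdb : x.1 + 1 = b.1 := by
      have := gammaS_dim S.dual hb0
      rw [hgb] at this
      exact this
    obtain ⟨na, pa⟩ := a
    obtain ⟨nb, pb⟩ := b
    have hda' : x.1 + 1 = na := hda
    have hdb' : x.1 + 1 = nb := hdb
    rcases Nat.eq_zero_or_pos x.1 with hx0 | hxpos
    · have hna : na = 1 := by omega
      have hnb : nb = 1 := by omega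
      subst hna
      subst hnb
      have d1 : inDelta S x ⟨1, pa⟩ := (inDelta_one_iff S pa x).2 hga
      have d2 : inDelta S x ⟨1, pb⟩ := (inDelta_one_iff S pb x).2 hgb
      rcases hS.pencil_delta x ⟨1, pa⟩ ⟨1, pb⟩ d1 d2 with h | h
      · exact Or.inl h
      · exact Or.inr (perpPlus_dual_of_pos S (a := ⟨1, pa⟩) (b := ⟨1, pb⟩)
          Nat.one_pos Nat.one_pos h)
    · have hga' : gammaS S ⟨na, pa⟩ = x := by
        rw [← gammaS_dual_ne_one S (q := (⟨na, pa⟩ : S.FaceS)) (show ¬ na = 1 by omega)]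
        exact hga
      have hgb' : gammaS S ⟨nb, pb⟩ = x := by
        rw [← gammaS_dual_ne_one S (q := (⟨nb, pb⟩ : S.FaceS)) (show ¬ nb = 1 by omega)]
        exact hgb
      rcases hS.pencil_gamma x ⟨na, pa⟩ ⟨nb, pb⟩ ⟨show 0 < na by omega, hga'⟩
        ⟨show 0 < nb by omega, hgb'⟩ with h | h
      · exact Or.inl h
      · exact Or.inr (perpPlus_dual_of_pos S (a := ⟨na, pa⟩) (b := ⟨nb, pb⟩)
          (show 0 < na by omega) (show 0 < nb by omega) h)
  · -- pencil_delta
    intro x a b hxa hxb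
    have hda : x.1 + 1 = a.1 := inDelta_dim S.dual hxa
    have hdb : x.1 + 1 = b.1 := inDelta_dim S.dual hxb
    obtain ⟨na, pa⟩ := a
    obtain ⟨nb, pb⟩ := b
    have hda' : x.1 + 1 = na := hda
    have hdb' : x.1 + 1 = nb := hdb
    rcases Nat.eq_zero_or_pos x.1 with hx0 | hxpos
    · have hna : na = 1 := by omega
      have hnb : nb = 1 := by omega
      subst hna
      subst hnb
      have d1 : gammaS S ⟨1, pa⟩ = x := (inDelta_dual_one_iff S pa x).1 hxa
      have d2 : gammaS S ⟨1, pb⟩ = x := (inDelta_dual_one_iff S pb x).1 hxb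
      rcases hS.pencil_gamma x ⟨1, pa⟩ ⟨1, pb⟩ ⟨Nat.one_pos, d1⟩ ⟨Nat.one_pos, d2⟩ with h | h
      · exact Or.inl h
      · exact Or.inr (perpPlus_dual_of_pos S (a := ⟨1, pa⟩) (b := ⟨1, pb⟩)
          Nat.one_pos Nat.one_pos h)
    · have hxa' : inDelta S x ⟨na, pa⟩ :=
        (inDelta_dual_ne_one S (q := (⟨na, pa⟩ : S.FaceS)) (show ¬ na = 1 by omega)).1 hxa
      have hxb' : inDelta S x ⟨nb, pb⟩ :=
        (inDelta_dual_ne_one S (q := (⟨nb, pb⟩ : S.FaceS)) (show ¬ nb = 1 by omega)).1 hxb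
      rcases hS.pencil_delta x ⟨na, pa⟩ ⟨nb, pb⟩ hxa' hxb' with h | h
      · exact Or.inl h
      · exact Or.inr (perpPlus_dual_of_pos S (a := ⟨na, pa⟩) (b := ⟨nb, pb⟩)
          (show 0 < na by omega) (show 0 < nb by omega) h)
  · -- size_le_one
    intro k a b ha hb
    match k, a, b, ha, hb with
    | k+1, a, b, ha, hb => exact hS.size_le_one (k+1) a b ha hb
    | 0, a, b, ha, hb =>
      have ha' : ¬ ∃ α : S.Face 1, S.γ 0 α = a := ha
      have hb' : ¬ ∃ α : S.Face 1, S.γ 0 α = b := hb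
      rcases hS.linear0 ⟨0, a⟩ ⟨0, b⟩ rfl rfl with h | h | h
      · exact eq_of_heq (Sigma.mk.inj h).2
      · exact absurd h (no_gamma_not_lt S hb' _)
      · exact absurd h (no_gamma_not_lt S ha' _)
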